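/- Let X, Y be real Banach spaces and F : B_X → B_Y a bijective non-expansive map with F(S_X) = S_Y. Suppose V ⊆ S_X satisfies F(a·v) = a·F(v) for all a ∈ [−1, 1] and v ∈ V. Let A = {t·x : x ∈ V, t ∈ [−1, 1]}. Then the restriction of F to A is a bijective isometry from A onto F(A). -/

import Mathlib

set_option maxHeartbeats 2000000

private lemma chord_aux {X : Type*} [NormedAddCommGroup X] [NormedSpace ℝ X]
    (e uu : X) {a b x : ℝ} (hab : a < b) (hax : a ≤ x) (hxb : x ≤ b) :
    ‖e + x • uu‖ ≤ ‖e + a • uu‖ + (x - a) * ((‖e + b • uu‖ - ‖e + a • uu‖) / (b - a)) := by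
  have hba : (0:ℝ) < b - a := by linarith
  set s : ℝ := (x - a) / (b - a) with hs
  have hs0 : 0 ≤ s := div_nonneg (by linarith) hba.le
  have hs1 : s ≤ 1 := by rw [hs, div_le_one hba]; linarith
  have hx' : x = (1 - s) * a + s * b := by
    rw [hs]; field_simp; ring
  have hdec : e + x • uu = (1 - s) • (e + a • uu) + s • (e + b • uu) := by
    rw [hx']; match_scalars <;> ring
  rw [hdec]
  have h1 : ‖(1 - s) • (e + a • uu) + s • (e + b • uu)‖
      ≤ (1-s) * ‖e + a • uu‖ + s * ‖e + b • uu‖ := by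
    calc ‖(1 - s) • (e + a • uu) + s • (e + b • uu)‖
        ≤ ‖(1 - s) • (e + a • uu)‖ + ‖s • (e + b • uu)‖ := norm_add_le _ _
      _ = (1-s) * ‖e + a • uu‖ + s * ‖e + b • uu‖ := by
          rw [norm_smul, norm_smul, Real.norm_eq_abs, Real.norm_eq_abs,
            abs_of_nonneg (by linarith), abs_of_nonneg hs0]
  have h3 : (x - a) * ((‖e + b • uu‖ - ‖e + a • uu‖) / (b - a)) = s * (‖e + b • uu‖ - ‖e + a • uu‖) := by
    rw [hs]; ring
  have h2 : (1-s) * ‖e + a • uu‖ + s * ‖e + b • uu‖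
      = ‖e + a • uu‖ + (x - a) * ((‖e + b • uu‖ - ‖e + a • uu‖) / (b - a)) := by
    rw [h3]; ring
  linarith

private lemma pigeon_aux (m : ℕ → ℝ) (U : ℝ) (N : ℕ) (hN : 0 < N)
    (habs : ∀ i, |m i| ≤ U) :
    ∃ i, i < N ∧ m (i+1) - m i ≤ 2*U/N := by
  by_contra hcon
  push_neg at hcon
  have hN' : ((N:ℝ)) ≠ 0 := Nat.cast_ne_zero.mpr hN.ne'
  have hsum : ∑ i ∈ Finset.range N, (m (i+1) - m i) = m N - m 0 := Finset.sum_range_sub m N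
  have hconst : ∑ _i ∈ Finset.range N, (2*U/N : ℝ) = 2*U := by
    rw [Finset.sum_const, Finset.card_range, nsmul_eq_mul]
    field_simp
  have hlt : (2*U : ℝ) < m N - m 0 := by
    rw [← hconst, ← hsum]
    refine Finset.sum_lt_sum_of_nonempty (Finset.nonempty_range_iff.mpr hN.ne') ?_
    intro i hi
    exact hcon i (Finset.mem_range.mp hi)
  have h1 := abs_le.mp (habs N)
  have h2 := abs_le.mp (habs 0)
  linarith [h1.1, h1.2, h2.1, h2.2]




theorem nonexpansive_bijection_isometry_on_rays
    {X Y : Type*} [NormedAddCommGroup X] [NormedSpace ℝ X] [CompleteSpace X]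
    [NormedAddCommGroup Y] [NormedSpace ℝ Y] [CompleteSpace Y]
    (F : Metric.closedBall (0 : X) 1 → Metric.closedBall (0 : Y) 1)
    (hbij : Function.Bijective F)
    (hne : ∀ u v : Metric.closedBall (0 : X) 1,
      ‖(F u : Y) - (F v : Y)‖ ≤ ‖(u : X) - (v : X)‖)
    (hsph : (fun u : Metric.closedBall (0 : X) 1 => (F u : Y)) ''
        {u : Metric.closedBall (0 : X) 1 | ‖(u : X)‖ = 1} = Metric.sphere (0 : Y) 1)
    (V : Set X) (hV : V ⊆ Metric.sphere (0 : X) 1)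
    (hhom : ∀ v ∈ V, ∀ a ∈ Set.Icc (-1 : ℝ) 1,
      ∀ (hav : a • v ∈ Metric.closedBall (0 : X) 1)
        (hv1 : v ∈ Metric.closedBall (0 : X) 1),
      (F ⟨a • v, hav⟩ : Y) = a • (F ⟨v, hv1⟩ : Y)) :
    ∀ u w : Metric.closedBall (0 : X) 1,
      (u : X) ∈ {p : X | ∃ x ∈ V, ∃ t ∈ Set.Icc (-1 : ℝ) 1, p = t • x} →
      (w : X) ∈ {p : X | ∃ x ∈ V, ∃ t ∈ Set.Icc (-1 : ℝ) 1, p = t • x} →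
      ‖(F u : Y) - (F w : Y)‖ = ‖(u : X) - (w : X)‖ := by
  intro u w hu hw
  obtain ⟨x₁, hx₁V, t₁, ht₁, hu'⟩ := hu
  obtain ⟨x₂, hx₂V, t₂, ht₂, hw'⟩ := hw
  have hx₁s : ‖x₁‖ = 1 := by
    have := hV hx₁V; rwa [mem_sphere_zero_iff_norm] at this
  have hx₂s : ‖x₂‖ = 1 := by
    have := hV hx₂V; rwa [mem_sphere_zero_iff_norm] at this
  have hmem : ∀ (a : ℝ) (x : X), ‖x‖ = 1 → a ∈ Set.Icc (-1:ℝ) 1 →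
      a • x ∈ Metric.closedBall (0:X) 1 := by
    intro a x hx ha
    rw [Metric.mem_closedBall, dist_zero_right, norm_smul, hx, mul_one, Real.norm_eq_abs]
    exact abs_le.mpr ha
  have hx₁b : x₁ ∈ Metric.closedBall (0:X) 1 := by
    rw [Metric.mem_closedBall, dist_zero_right, hx₁s]
  have hx₂b : x₂ ∈ Metric.closedBall (0:X) 1 := by
    rw [Metric.mem_closedBall, dist_zero_right, hx₂s]
  have hFu : (F u : Y) = t₁ • (F ⟨x₁, hx₁b⟩ : Y) := by
    have hu2 : u = ⟨t₁ • x₁, hmem t₁ x₁ hx₁s ht₁⟩ := Subtype.ext hu'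
    rw [hu2, hhom x₁ hx₁V t₁ ht₁ _ hx₁b]
  have hFw : (F w : Y) = t₂ • (F ⟨x₂, hx₂b⟩ : Y) := by
    have hw2 : w = ⟨t₂ • x₂, hmem t₂ x₂ hx₂s ht₂⟩ := Subtype.ext hw'
    rw [hw2, hhom x₂ hx₂V t₂ ht₂ _ hx₂b]
  have hFnorm : ∀ (z : X) (hz : z ∈ Metric.closedBall (0:X) 1), ‖z‖ = 1 →
      ‖(F ⟨z, hz⟩ : Y)‖ = 1 := by
    intro z hz hz1
    have hmem' : (F ⟨z,hz⟩ : Y) ∈ Metric.sphere (0:Y) 1 := by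
      rw [← hsph]; exact ⟨⟨z, hz⟩, hz1, rfl⟩
    rwa [mem_sphere_zero_iff_norm] at hmem'
  -- key functional inequality
  have key : ∀ σ : ℝ, 0 < σ → σ ≤ 1 → ∀ (z : X) (hzb : z ∈ Metric.closedBall (0:X) 1),
      ‖z‖ = 1 →
      2 - ‖z - σ • (u:X)‖ - ‖z + σ • (w:X)‖ ≤ σ * ‖(F u : Y) - (F w : Y)‖ := by
    intro σ hσ0 hσ1 z hzb hz1
    have hFz1 : ‖(F ⟨z, hzb⟩ : Y)‖ = 1 := hFnorm z hzb hz1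
    have hFz0 : (F ⟨z, hzb⟩ : Y) ≠ 0 := by
      intro h; rw [h, norm_zero] at hFz1; norm_num at hFz1
    obtain ⟨f, hf1, hfz⟩ := exists_dual_vector ℝ _ (norm_ne_zero_iff.mpr hFz0)
    rw [hFz1] at hfz
    have hfz' : f (F ⟨z, hzb⟩ : Y) = 1 := by simpa using hfz
    have h1m : σ * t₁ ∈ Set.Icc (-1:ℝ) 1 := by
      obtain ⟨h1, h2⟩ := ht₁
      constructor <;> nlinarith [h1, h2, hσ0, hσ1, mul_nonneg hσ0.le (by linarith only [h1] : (0:ℝ) ≤ t₁ + 1)]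
    have h2m : -(σ * t₂) ∈ Set.Icc (-1:ℝ) 1 := by
      obtain ⟨h1, h2⟩ := ht₂
      constructor <;> nlinarith [h1, h2, hσ0, hσ1, mul_nonneg hσ0.le (by linarith only [h1] : (0:ℝ) ≤ t₂ + 1)]
    have hF1 : (F ⟨(σ*t₁) • x₁, hmem _ _ hx₁s h1m⟩ : Y) = (σ*t₁) • (F ⟨x₁, hx₁b⟩ : Y) :=
      hhom x₁ hx₁V _ h1m _ hx₁b
    have hF2 : (F ⟨(-(σ*t₂)) • x₂, hmem _ _ hx₂s h2m⟩ : Y) = (-(σ*t₂)) • (F ⟨x₂, hx₂b⟩ : Y) :=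
      hhom x₂ hx₂V _ h2m _ hx₂b
    have hd1 : ‖(F ⟨z,hzb⟩ : Y) - (σ*t₁) • (F ⟨x₁, hx₁b⟩ : Y)‖ ≤ ‖z - σ • (u:X)‖ := by
      have h := hne ⟨z,hzb⟩ ⟨(σ*t₁) • x₁, hmem _ _ hx₁s h1m⟩
      rw [hF1] at h
      have harg : z - (σ*t₁) • x₁ = z - σ • (u:X) := by
        rw [hu', smul_smul]
      simpa [harg] using h
    have hd2 : ‖(F ⟨z,hzb⟩ : Y) + (σ*t₂) • (F ⟨x₂, hx₂b⟩ : Y)‖ ≤ ‖z + σ • (w:X)‖ := by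
      have h := hne ⟨z,hzb⟩ ⟨(-(σ*t₂)) • x₂, hmem _ _ hx₂s h2m⟩
      rw [hF2] at h
      have e1 : (F ⟨z,hzb⟩ : Y) - (-(σ*t₂)) • (F ⟨x₂, hx₂b⟩ : Y)
          = (F ⟨z,hzb⟩ : Y) + (σ*t₂) • (F ⟨x₂, hx₂b⟩ : Y) := by
        rw [neg_smul, sub_neg_eq_add]
      have e2 : z - (-(σ*t₂)) • x₂ = z + σ • (w:X) := by
        rw [hw', smul_smul, neg_smul, sub_neg_eq_add]
      rw [e1, e2] at h
      exact h
    have habs : ∀ y : Y, f y ≤ ‖y‖ := by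
      intro y
      calc f y ≤ |f y| := le_abs_self _
        _ = ‖f y‖ := (Real.norm_eq_abs _).symm
        _ ≤ ‖f‖ * ‖y‖ := f.le_opNorm y
        _ = ‖y‖ := by rw [hf1, one_mul]
    have hb1 : 1 - ‖z - σ • (u:X)‖ ≤ f ((σ*t₁) • (F ⟨x₁, hx₁b⟩ : Y)) := by
      have h := habs ((F ⟨z,hzb⟩ : Y) - (σ*t₁) • (F ⟨x₁, hx₁b⟩ : Y))
      rw [map_sub] at h
      have h5 := le_trans h hd1
      linarith only [h5, hfz']
    have hb2 : 1 - ‖z + σ • (w:X)‖ ≤ - f ((σ*t₂) • (F ⟨x₂, hx₂b⟩ : Y)) := by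
      have h := habs ((F ⟨z,hzb⟩ : Y) + (σ*t₂) • (F ⟨x₂, hx₂b⟩ : Y))
      rw [map_add] at h
      have h5 := le_trans h hd2
      linarith only [h5, hfz']
    have hval : f ((σ*t₁) • (F ⟨x₁, hx₁b⟩ : Y)) - f ((σ*t₂) • (F ⟨x₂, hx₂b⟩ : Y))
        ≤ σ * ‖(F u : Y) - (F w : Y)‖ := by
      have heq : (σ*t₁) • (F ⟨x₁, hx₁b⟩ : Y) - (σ*t₂) • (F ⟨x₂, hx₂b⟩ : Y)
          = σ • ((F u : Y) - (F w : Y)) := by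
        rw [hFu, hFw, smul_sub, smul_smul, smul_smul]
      calc f ((σ*t₁) • (F ⟨x₁, hx₁b⟩ : Y)) - f ((σ*t₂) • (F ⟨x₂, hx₂b⟩ : Y))
          = f ((σ*t₁) • (F ⟨x₁, hx₁b⟩ : Y) - (σ*t₂) • (F ⟨x₂, hx₂b⟩ : Y)) := by
            rw [map_sub]
        _ ≤ ‖(σ*t₁) • (F ⟨x₁, hx₁b⟩ : Y) - (σ*t₂) • (F ⟨x₂, hx₂b⟩ : Y)‖ := habs _
        _ = ‖σ • ((F u : Y) - (F w : Y))‖ := by rw [heq]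
        _ = σ * ‖(F u : Y) - (F w : Y)‖ := by
            rw [norm_smul, Real.norm_eq_abs, abs_of_pos hσ0]
    linarith only [hb1, hb2, hval]
  refine le_antisymm (hne u w) ?_
  rcases eq_or_lt_of_le (norm_nonneg ((u:X) - (w:X))) with h0 | hγ
  · rw [← h0]; exact norm_nonneg _
  refine le_of_forall_pos_le_add ?_
  intro ε hε
  set uu : X := (u:X) with huu
  set ww : X := (w:X) with hww
  set γ : ℝ := ‖uu - ww‖ with hγdef
  set e : X := γ⁻¹ • (uu - ww) with he
  have he1 : ‖e‖ = 1 := by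
    rw [he, norm_smul, Real.norm_eq_abs, abs_of_pos (inv_pos.mpr hγ), ← hγdef,
      inv_mul_cancel₀ hγ.ne']
  have hwe : ww = uu - γ • e := by
    rw [he, smul_smul, mul_inv_cancel₀ hγ.ne', one_smul, sub_sub_cancel]
  set U : ℝ := ‖uu‖ with hU
  have hU0 : (0:ℝ) ≤ U := norm_nonneg _
  set k : ℝ → ℝ := fun τ => ‖e + τ • uu‖ with hk
  have hkk : ∀ x : ℝ, ‖e + x • uu‖ = k x := fun x => rfl
  have hk0 : k 0 = 1 := by
    rw [← hkk 0, zero_smul, add_zero, he1]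
  have hkL : ∀ a b : ℝ, |k a - k b| ≤ U * |a - b| := by
    intro a b
    rw [← hkk a, ← hkk b]
    have h := abs_norm_sub_norm_le (e + a • uu) (e + b • uu)
    have harg : e + a • uu - (e + b • uu) = (a - b) • uu := by
      rw [sub_smul]; abel
    rw [harg, norm_smul, Real.norm_eq_abs] at h
    calc |‖e + a • uu‖ - ‖e + b • uu‖| ≤ |a-b| * ‖uu‖ := h
      _ = U * |a - b| := by rw [← hU]; ring
  set N : ℕ := ⌈(4*U)/ε⌉₊ + 1 with hN
  have hNpos : 0 < N := Nat.succ_pos _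
  have hNr : (0:ℝ) < (N:ℝ) := by exact_mod_cast hNpos
  have hNbound : 2*U/(N:ℝ) ≤ ε/2 := by
    have h1 : (4*U)/ε ≤ ((⌈(4*U)/ε⌉₊ : ℝ)) := Nat.le_ceil _
    have h2 : ((⌈(4*U)/ε⌉₊ : ℝ)) ≤ (N:ℝ) := by rw [hN]; push_cast; linarith only []
    have h3 : 4*U ≤ ε*(N:ℝ) := by
      rw [div_le_iff₀ hε] at h1
      nlinarith [h1, h2, hε]
    rw [div_le_div_iff₀ hNr two_pos]; linarith only [h3]
  set B₀ : ℝ := ((N:ℝ)+2)*(U+1) with hB₀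
  have hB₀pos : 0 < B₀ := by
    rw [hB₀]
    exact mul_pos (by linarith only [hNr]) (by linarith only [hU0])
  set h : ℝ := min (1/(2*B₀)) (ε/(4*γ*B₀)) with hh
  have h4γB : (0:ℝ) < 4*γ*B₀ := by
    have := mul_pos (mul_pos (by norm_num : (0:ℝ) < 4) hγ) hB₀pos
    linarith only [this]
  have hhpos : 0 < h := lt_min (by positivity) (div_pos hε h4γB)
  have hh1 : h ≤ 1/(2*B₀) := min_le_left _ _
  have hh2 : h ≤ ε/(4*γ*B₀) := min_le_right _ _
  have hh2B : h * (2*B₀) ≤ 1 := by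
    rw [le_div_iff₀ (by linarith only [hB₀pos] : (0:ℝ) < 2*B₀)] at hh1
    linarith only [hh1]
  set m : ℕ → ℝ := fun i => (k (((i:ℝ)+2)*h) - k (((i:ℝ)+1)*h))/h with hm
  have hmabs : ∀ i, |m i| ≤ U := by
    intro i
    simp only [hm]
    rw [abs_div, abs_of_pos hhpos, div_le_iff₀ hhpos]
    have h1 := hkL (((i:ℝ)+2)*h) (((i:ℝ)+1)*h)
    have h2 : (((i:ℝ)+2)*h) - (((i:ℝ)+1)*h) = h := by ring
    rw [h2, abs_of_pos hhpos] at h1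
    exact h1
  obtain ⟨i₀, hi₀, hgap⟩ := pigeon_aux m U N hNpos hmabs
  have hs₁ : m i₀ = (k (((i₀:ℝ)+2)*h) - k (((i₀:ℝ)+1)*h))/h := by simp only [hm]
  have hs₂ : m (i₀+1) = (k (((i₀:ℝ)+3)*h) - k (((i₀:ℝ)+2)*h))/h := by
    simp only [hm]
    push_cast
    rw [show ((i₀:ℝ)+1+2)*h = ((i₀:ℝ)+3)*h from by ring,
      show ((i₀:ℝ)+1+1)*h = ((i₀:ℝ)+2)*h from by ring]
  set τ' : ℝ := ((i₀:ℝ)+1)*h with hτ'def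
  set τ : ℝ := ((i₀:ℝ)+2)*h with hτdef
  set τ'' : ℝ := ((i₀:ℝ)+3)*h with hτ''def
  have hτpos : 0 < τ := by
    rw [hτdef]; exact mul_pos (by positivity) hhpos
  have hττ' : τ' < τ := by
    rw [hτ'def, hτdef]
    exact mul_lt_mul_of_pos_right (by linarith only []) hhpos
  have hττ'' : τ < τ'' := by
    rw [hτdef, hτ''def]
    exact mul_lt_mul_of_pos_right (by linarith only []) hhpos
  have hττ'h : τ - τ' = h := by rw [hτ'def, hτdef]; ring
  have hτ''τh : τ'' - τ = h := by rw [hτdef, hτ''def]; ring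
  have hτbound : τ ≤ ((N:ℝ)+2)*h := by
    rw [hτdef]
    have hiN : (i₀:ℝ) ≤ (N:ℝ) := by exact_mod_cast hi₀.le
    exact mul_le_mul_of_nonneg_right (by linarith only [hiN]) hhpos.le
  have hτU : τ*U ≤ 1/2 := by
    have s1 : τ*U ≤ ((N:ℝ)+2)*h*U := mul_le_mul_of_nonneg_right hτbound hU0
    have hh2B' : h*(2*(((N:ℝ)+2)*(U+1))) ≤ 1 := by rw [hB₀] at hh2B; exact hh2B
    have w1 : (0:ℝ) ≤ ((N:ℝ)+2)*h := mul_nonneg (by positivity) hhpos.le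
    linarith only [s1, hh2B', w1]
  set K : ℝ := k τ with hK
  have hKlow : 1 - τ*U ≤ K := by
    have h1 := hkL 0 τ
    rw [hk0] at h1
    have h2 : |(0:ℝ) - τ| = τ := by rw [abs_sub_comm, sub_zero, abs_of_pos hτpos]
    rw [h2] at h1
    have h3 := abs_le.mp h1
    have hcomm : U*τ = τ*U := mul_comm _ _
    rw [hK]
    linarith only [h3.1, h3.2, hcomm]
  have hK0 : (0:ℝ) < K := by linarith only [hτU, hKlow]
  set z : X := K⁻¹ • (e + τ • uu) with hz
  have hz1 : ‖z‖ = 1 := by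
    rw [hz, norm_smul, Real.norm_eq_abs, abs_of_pos (inv_pos.mpr hK0), hkk,
      ← hK, inv_mul_cancel₀ hK0.ne']
  have hzb : z ∈ Metric.closedBall (0:X) 1 := by
    rw [Metric.mem_closedBall, dist_zero_right, hz1]
  set D : ℝ := K + 2*K*(1+τ*γ) + 2*h*γ*K + 1 with hD
  have hτγ : (0:ℝ) ≤ τ*γ := mul_nonneg hτpos.le hγ.le
  have hhγK : (0:ℝ) ≤ 2*h*γ*K := by
    have h6 := mul_nonneg (mul_nonneg (mul_nonneg (by norm_num : (0:ℝ) ≤ 2) hhpos.le) hγ.le) hK0.le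
    linarith only [h6]
  have hKτγ : (0:ℝ) ≤ K*(τ*γ) := mul_nonneg hK0.le hτγ
  have hpA : (0:ℝ) ≤ 2*K*(1+τ*γ) :=
    mul_nonneg (by linarith only [hK0] : (0:ℝ) ≤ 2*K) (by linarith only [hτγ] : (0:ℝ) ≤ 1+τ*γ)
  have hD0 : 0 < D := by rw [hD]; linarith only [hpA, hhγK, hK0]
  set σ : ℝ := h / D with hσ
  have hσ0 : 0 < σ := div_pos hhpos hD0
  have hσD : σ * D = h := by rw [hσ]; field_simp
  have hKD : K ≤ D := by rw [hD]; linarith only [hpA, hhγK]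
  have hσK : σ*K ≤ h := by
    calc σ*K ≤ σ*D := mul_le_mul_of_nonneg_left hKD hσ0.le
      _ = h := hσD
  have hDge1 : (1:ℝ) ≤ D := by rw [hD]; linarith only [hpA, hhγK, hK0.le]
  have hh1' : h ≤ 1 := by
    have hB₀1 : (1:ℝ) ≤ 2*B₀ := by
      rw [hB₀]
      have h12 : (1:ℝ)*1 ≤ ((N:ℝ)+2)*(U+1) :=
        mul_le_mul (by linarith only [hNr]) (by linarith only [hU0]) (by norm_num)
          (by linarith only [hNr])
      linarith only [h12]
    have h13 : 1/(2*B₀) ≤ 1 := by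
      rw [div_le_one (by linarith only [hB₀1])]
      linarith only [hB₀1]
    linarith only [hh1, h13]
  have hσ1 : σ ≤ 1 := by
    have hσh : σ ≤ h := by
      calc σ = σ * 1 := (mul_one σ).symm
        _ ≤ σ * D := mul_le_mul_of_nonneg_left hDge1 hσ0.le
        _ = h := hσD
    linarith only [hσh, hh1']
  have hDge2 : 2*h*γ*K + 1 ≤ D := by rw [hD]; linarith only [hpA, hK0.le]
  have hσγK : σ*γ*K ≤ 1/2 := by
    have e1 : σ*γ*K*D = h*γ*K := by rw [hσ]; field_simp
    by_contra hcon
    push_neg at hcon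
    have e3 : (1/2)*D < (σ*γ*K)*D := mul_lt_mul_of_pos_right hcon hD0
    have e4 : (σ*γ*K)*D = σ*γ*K*D := by ring
    rw [e4, e1] at e3
    linarith only [e3, hDge2, hK0, hτγ, hKτγ, hhγK, hD0]
  have hden : (0:ℝ) < 1 - σ*γ*K := by linarith only [hσγK]
  set xσ : ℝ := (τ + σ*K)/(1 - σ*γ*K) with hxσ
  have hxσ_lb : τ ≤ xσ := by
    rw [hxσ, le_div_iff₀ hden]
    have p1 : (0:ℝ) ≤ τ*(σ*γ*K) :=
      mul_nonneg hτpos.le (mul_nonneg (mul_nonneg hσ0.le hγ.le) hK0.le)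
    have p2 : (0:ℝ) ≤ σ*K := mul_nonneg hσ0.le hK0.le
    linarith only [p1, p2]
  have hxσ_ub : xσ ≤ τ'' := by
    rw [hxσ, div_le_iff₀ hden]
    have hτ''e : τ'' = τ + h := by linarith only [hτ''τh]
    rw [hτ''e]
    have hγK0 : (0:ℝ) ≤ h*γ*K := by linarith only [hhγK]
    have hle : K + τ*γ*K + h*γ*K ≤ D := by
      rw [hD]; linarith only [hKτγ, hγK0, hK0.le]
    have q1 := mul_le_mul_of_nonneg_left hle hσ0.le
    linarith only [q1, hσD]
  have hchord1 : k (τ - σ*K) ≤ K - (σ*K) * m i₀ := by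
    have hax : τ' ≤ τ - σ*K := by linarith only [hσK, hττ'h]
    have hxb : τ - σ*K ≤ τ := by linarith only [mul_nonneg hσ0.le hK0.le]
    have hc := chord_aux e uu (a := τ') (b := τ) (x := τ - σ*K) hττ' hax hxb
    simp only [hkk] at hc
    rw [hττ'h] at hc
    have hstep : k τ' + ((τ - σ*K) - τ') * ((k τ - k τ')/h) = K - (σ*K) * m i₀ := by
      rw [show (τ - σ*K) - τ' = h - σ*K from by linarith only [hττ'h], hs₁, hK]
      field_simp
      ring
    rw [← hstep]
    exact hc
  have hchord2 : k xσ ≤ K + (xσ - τ) * m (i₀+1) := by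
    have hc := chord_aux e uu (a := τ) (b := τ'') (x := xσ) hττ'' hxσ_lb hxσ_ub
    simp only [hkk] at hc
    rw [hτ''τh] at hc
    have hstep : k τ + (xσ - τ) * ((k τ'' - k τ)/h) = K + (xσ - τ) * m (i₀+1) := by
      rw [hs₂, hK]
    rw [← hstep]
    exact hc
  have hA : ‖z - σ • uu‖ ≤ 1 - σ * m i₀ := by
    have hzs : z - σ • uu = K⁻¹ • (e + (τ - σ*K) • uu) := by
      rw [hz]; match_scalars <;> (field_simp; try ring)
    rw [hzs, norm_smul, Real.norm_eq_abs, abs_of_pos (inv_pos.mpr hK0), hkk]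
    have h1 : K⁻¹ * k (τ - σ*K) ≤ K⁻¹ * (K - σ*K * m i₀) :=
      mul_le_mul_of_nonneg_left hchord1 (inv_pos.mpr hK0).le
    have h2 : K⁻¹ * (K - σ*K * m i₀) = 1 - σ * m i₀ := by
      field_simp
    linarith only [h1, h2]
  have hcoef : (0:ℝ) ≤ K⁻¹ - σ*γ := by
    have h2 : σ*γ ≤ K⁻¹ := by
      rw [← one_div, le_div_iff₀ hK0]; linarith only [hσγK]
    linarith only [h2]
  have hzw : z + σ • ww = (K⁻¹ - σ*γ) • (e + xσ • uu) := by
    have hx : xσ*(1-σ*γ*K) = τ+σ*K := by rw [hxσ]; exact div_mul_cancel₀ _ hden.ne'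
    clear_value xσ
    rw [hwe, hz]; match_scalars
    · field_simp; linear_combination -γ * hx
    · field_simp; ring
  have hB : ‖z + σ • ww‖ ≤ 1 - σ*γ*K + σ*(1+τ*γ) * m (i₀+1) := by
    rw [hzw, norm_smul, Real.norm_eq_abs, abs_of_nonneg hcoef, hkk]
    have h1 : (K⁻¹ - σ*γ) * k xσ ≤ (K⁻¹ - σ*γ) * (K + (xσ - τ) * m (i₀+1)) :=
      mul_le_mul_of_nonneg_left hchord2 hcoef
    have h2 : (K⁻¹ - σ*γ) * (K + (xσ - τ) * m (i₀+1)) = 1 - σ*γ*K + σ*(1+τ*γ) * m (i₀+1) := by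
      have hx : xσ*(1-σ*γ*K) = τ+σ*K := by rw [hxσ]; exact div_mul_cancel₀ _ hden.ne'
      field_simp; linear_combination m (i₀+1) * hx
    linarith only [h1, h2]
  have hkeyv := key σ hσ0 hσ1 z hzb hz1
  have hmain : m i₀ + γ*K - (1+τ*γ) * m (i₀+1) ≤ ‖(F u : Y) - (F w : Y)‖ := by
    have hstep : σ*(m i₀ + γ*K - (1+τ*γ) * m (i₀+1)) ≤ σ * ‖(F u : Y) - (F w : Y)‖ := by
      have expand : σ*(m i₀ + γ*K - (1+τ*γ) * m (i₀+1))
          = 2 - (1 - σ * m i₀) - (1 - σ*γ*K + σ*(1+τ*γ) * m (i₀+1)) := by ring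
      rw [expand]
      calc 2 - (1 - σ * m i₀) - (1 - σ*γ*K + σ*(1+τ*γ) * m (i₀+1))
          ≤ 2 - ‖z - σ • uu‖ - ‖z + σ • ww‖ := by linarith only [hA, hB]
        _ ≤ σ * ‖(F u : Y) - (F w : Y)‖ := hkeyv
    exact le_of_mul_le_mul_left hstep hσ0
  have hs₂U : m (i₀+1) ≤ U := le_trans (le_abs_self _) (hmabs _)
  have hτγU : τ*γ*(m (i₀+1)) ≤ τ*γ*U := mul_le_mul_of_nonneg_left hs₂U hτγ
  have hγKlow : γ*(1 - τ*U) ≤ γ*K := mul_le_mul_of_nonneg_left hKlow hγ.le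
  have hfr : 2*γ*τ*U ≤ ε/2 := by
    have s1 : τ*U ≤ ((N:ℝ)+2)*h*U := mul_le_mul_of_nonneg_right hτbound hU0
    have s2 : h*(4*γ*B₀) ≤ ε := by
      rw [le_div_iff₀ h4γB] at hh2; linarith only [hh2]
    have s3 : ((N:ℝ)+2)*U ≤ B₀ :=
      mul_le_mul_of_nonneg_left (by linarith only [] : U ≤ U+1)
        (by linarith only [hNr] : (0:ℝ) ≤ (N:ℝ)+2)
    have r1 : 2*γ*(τ*U) ≤ 2*γ*(((N:ℝ)+2)*h*U) :=
      mul_le_mul_of_nonneg_left s1 (by linarith only [hγ] : (0:ℝ) ≤ 2*γ)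
    have r2 : (2*γ*h)*(((N:ℝ)+2)*U) ≤ (2*γ*h)*B₀ :=
      mul_le_mul_of_nonneg_left s3
        (by positivity : (0:ℝ) ≤ 2*γ*h)
    linarith only [r1, r2, s2]
  have hfin : γ - 2*γ*τ*U - 2*U/(N:ℝ) ≤ ‖(F u : Y) - (F w : Y)‖ := by
    linarith only [hmain, hγKlow, hτγU, hgap]
  linarith only [hfin, hfr, hNbound]
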